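/- Let φ ∈ (0,1), ω = e^{2πiφ}, α ∈ ℂ, β = −iα, and let θ_s ∈ ℂ satisfy θ_s² = ω/(ω²−3ω+1+i(ω²−1)). Define Ψ : ℤ → ℂ² by Ψ(x) = (−θ_s)^x · (α, (1−ω)α+ωβ) for x ≥ 1, Ψ(0) = (α, β), and Ψ(x) = θ_s^{−x} · ((ω−1)β+ωα, β) for x ≤ −1. Then |θ_s|² = 1/(3−2cos(2πφ)+2sin(2πφ)), and the measure μ(x) = |Ψ^L(x)|² + |Ψ^R(x)|² satisfies μ(0) = 2|α|² and μ(x) = 2|α|² · |θ_s|^{2|x|} · (2−cos(2πφ)+sin(2πφ)) for every x ≠ 0; in particular μ is symmetric with respect to the origin. -/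

import Mathlib

noncomputable section

/-- Left component of the explicit stationary state of the Wojcik model. -/
def wojcikPsiL (α β ω θ : ℂ) (x : ℤ) : ℂ :=
  if 1 ≤ x then (-θ) ^ x.toNat * α
  else if x = 0 then α
  else θ ^ (-x).toNat * ((ω - 1) * β + ω * α)

/-- Right component of the explicit stationary state of the Wojcik model. -/
def wojcikPsiR (α β ω θ : ℂ) (x : ℤ) : ℂ :=
  if 1 ≤ x then (-θ) ^ x.toNat * ((1 - ω) * α + ω * β)
  else if x = 0 then β
  else θ ^ (-x).toNat * β

/-- The measure at position `x` associated with the explicit stationary state. -/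
def wojcikMu (α β ω θ : ℂ) (x : ℤ) : ℝ :=
  ‖wojcikPsiL α β ω θ x‖ ^ 2 + ‖wojcikPsiR α β ω θ x‖ ^ 2

theorem wojcik_stationary_measure_beta_eq_neg_i_alpha
    (φ : ℝ) (hφ : φ ∈ Set.Ioo (0 : ℝ) 1) (ω α β θ : ℂ)
    (hω : ω = Complex.exp (2 * (Real.pi : ℂ) * Complex.I * (φ : ℂ)))
    (hβ : β = -Complex.I * α)
    (hθ : θ ^ 2 = ω / (ω ^ 2 - 3 * ω + 1 + Complex.I * (ω ^ 2 - 1))) :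
    ‖θ‖ ^ 2 =
      1 / (3 - 2 * Real.cos (2 * Real.pi * φ) + 2 * Real.sin (2 * Real.pi * φ)) ∧
    wojcikMu α β ω θ 0 = 2 * ‖α‖ ^ 2 ∧
    (∀ x : ℤ, x ≠ 0 →
      wojcikMu α β ω θ x =
        2 * ‖α‖ ^ 2 * ‖θ‖ ^ (2 * x.natAbs) *
          (2 - Real.cos (2 * Real.pi * φ) + Real.sin (2 * Real.pi * φ))) ∧
    (∀ x : ℤ, wojcikMu α β ω θ (-x) = wojcikMu α β ω θ x) := by
  set t := 2 * Real.pi * φ with ht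
  have hc : ω = (Real.cos t : ℂ) + (Real.sin t : ℂ) * Complex.I := by
    rw [hω, show 2 * (Real.pi : ℂ) * Complex.I * (φ : ℂ) = ((t : ℝ) : ℂ) * Complex.I by
      rw [ht]; push_cast; ring, Complex.exp_mul_I, ← Complex.ofReal_cos, ← Complex.ofReal_sin]
  set c := Real.cos t with hcd
  set s := Real.sin t with hsd
  have hpy : s ^ 2 + c ^ 2 = 1 := Real.sin_sq_add_cos_sq t
  have hA : 0 < 3 - 2 * c + 2 * s := by
    nlinarith [hpy, sq_nonneg (2 * (c - s) - 3), sq_nonneg (c + s)]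
  have h1C : (c : ℂ) ^ 2 + (s : ℂ) ^ 2 = 1 := by
    have : c ^ 2 + s ^ 2 = 1 := by linarith
    exact_mod_cast congrArg (Complex.ofReal) this
  have key : ω ^ 2 - 3 * ω + 1 + Complex.I * (ω ^ 2 - 1)
      = -ω * (((3 - 2 * c + 2 * s : ℝ)) : ℂ) := by
    rw [hc]
    push_cast
    linear_combination (Complex.I - 1) * h1C +
      ((s : ℂ) ^ 2 + 2 * (c : ℂ) * (s : ℂ) + (s : ℂ) ^ 2 * Complex.I) * Complex.I_sq
  have hω0 : ω ≠ 0 := by rw [hω]; exact Complex.exp_ne_zero _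
  have hAne : (((3 - 2 * c + 2 * s : ℝ)) : ℂ) ≠ 0 := Complex.ofReal_ne_zero.mpr hA.ne'
  have hθ2 : θ ^ 2 = (((-(1 / (3 - 2 * c + 2 * s))) : ℝ) : ℂ) := by
    have hAne' : ((3 : ℂ) - 2 * (c : ℂ) + 2 * (s : ℂ)) ≠ 0 := by
      exact_mod_cast hAne
    rw [hθ, key]
    push_cast
    rw [div_eq_iff (mul_ne_zero (neg_ne_zero.mpr hω0) hAne')]
    field_simp
  have habsθ : ‖θ‖ ^ 2 = 1 / (3 - 2 * c + 2 * s) := by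
    rw [← norm_pow, hθ2, Complex.norm_real, Real.norm_eq_abs, abs_neg, abs_of_pos (by positivity)]
  have e1 : ‖(1 - ω) - Complex.I * ω‖ ^ 2 = 3 - 2 * c + 2 * s := by
    rw [Complex.sq_norm, hc, Complex.normSq_apply]
    simp [Complex.add_re, Complex.add_im, Complex.mul_re, Complex.mul_im,
      Complex.sub_re, Complex.sub_im]
    nlinarith [hpy]
  have e2 : ‖(1 - Complex.I) * ω + Complex.I‖ ^ 2 = 3 - 2 * c + 2 * s := by
    rw [Complex.sq_norm, hc, Complex.normSq_apply]
    simp [Complex.add_re, Complex.add_im, Complex.mul_re, Complex.mul_im,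
      Complex.sub_re, Complex.sub_im]
    nlinarith [hpy]
  have main : ∀ x : ℤ, x ≠ 0 →
      wojcikMu α β ω θ x =
        2 * ‖α‖ ^ 2 * ‖θ‖ ^ (2 * x.natAbs) * (2 - c + s) := by
    intro x hx
    have hp : ‖θ‖ ^ (2 * x.natAbs) = (‖θ‖ ^ x.natAbs) ^ 2 := by
      rw [mul_comm, pow_mul]
    rcases lt_or_gt_of_ne hx with hneg | hpos
    · have h1 : ¬(1 ≤ x) := by omega
      have hn : (-x).toNat = x.natAbs := by omega
      unfold wojcikMu wojcikPsiL wojcikPsiR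
      rw [if_neg h1, if_neg hx, if_neg h1, if_neg hx, hn, hβ]
      have hL : (ω - 1) * (-Complex.I * α) + ω * α =
          ((1 - Complex.I) * ω + Complex.I) * α := by ring
      rw [hL]
      simp only [norm_mul, norm_pow, norm_neg, Complex.norm_I]
      rw [hp]
      linear_combination ((‖θ‖ ^ x.natAbs) ^ 2 * ‖α‖ ^ 2) * e2
    · have h1 : (1 : ℤ) ≤ x := hpos
      have hn : x.toNat = x.natAbs := by omega
      unfold wojcikMu wojcikPsiL wojcikPsiR
      rw [if_pos h1, if_pos h1, hn, hβ]
      have hR : (1 - ω) * α + ω * (-Complex.I * α) =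
          ((1 - ω) - Complex.I * ω) * α := by ring
      rw [hR]
      simp only [norm_mul, norm_pow, norm_neg, Complex.norm_I]
      rw [hp]
      linear_combination ((‖θ‖ ^ x.natAbs) ^ 2 * ‖α‖ ^ 2) * e1
  refine ⟨habsθ, ?_, main, ?_⟩
  · unfold wojcikMu wojcikPsiL wojcikPsiR
    norm_num [hβ]
    ring
  · intro x
    by_cases hx : x = 0
    · simp [hx]
    · rw [main x hx, main (-x) (neg_ne_zero.mpr hx), Int.natAbs_neg]

end
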